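/- Let F be the forest induced by a most parsimonious extension of a character χ to an X-tree T. Then χ is convex on T (i.e., ℓ(T,χ) = |χ| − 1) if and only if every state of χ is assigned to exactly one component of F. -/

import Mathlib

open SimpleGraph

namespace PhyloMP

/-- The set of mutation edges of a vertex coloring `ω` of a graph:
edges whose two endpoints receive different states. -/
def mutationEdges {V C : Type} (g : SimpleGraph V) (ω : V → C) : Set (Sym2 V) :=
  {e | e ∈ g.edgeSet ∧ ∃ u v : V, e = s(u, v) ∧ ω u ≠ ω v}

/-- An unrooted binary phylogenetic tree on taxon set `X`, with vertex set `V`: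
a tree whose degree-1 vertices (leaves) are bijectively labeled by `X` and whose
other vertices have degree 3. -/
structure XTree (X V : Type) [Fintype V] where
  g : SimpleGraph V
  isTree : g.IsTree
  leaf : X → V
  leafInj : Function.Injective leaf
  leafDeg : ∀ x, (g.neighborSet (leaf x)).ncard = 1
  leavesOnly : ∀ v, (g.neighborSet v).ncard = 1 → ∃ x, leaf x = v
  internalDeg : ∀ v, (g.neighborSet v).ncard ≠ 1 → (g.neighborSet v).ncard = 3

variable {X V C : Type} [Fintype V]

/-- `ω` extends the character `χ` to all vertices of `T`. -/
def IsExtension (T : XTree X V) (χ : X → C) (ω : V → C) : Prop :=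
  ∀ x, ω (T.leaf x) = χ x

/-- The parsimony score `ℓ(T,χ)`: the minimum number of mutation edges over
all extensions of `χ` to `T`. -/
noncomputable def score (T : XTree X V) (χ : X → C) : ℕ :=
  sInf {n | ∃ ω : V → C, IsExtension T χ ω ∧ (mutationEdges T.g ω).ncard = n}

/-- A most parsimonious extension. -/
def IsMPExtension (T : XTree X V) (χ : X → C) (ω : V → C) : Prop :=
  IsExtension T χ ω ∧ (mutationEdges T.g ω).ncard = score T χ

/-- `|χ|`: the number of states used by the character `χ`. -/
noncomputable def nStates {X C : Type} (χ : X → C) : ℕ := (Set.range χ).ncard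

/-- `χ` is convex on `T`: its parsimony score equals its number of states minus one. -/
def IsConvex (T : XTree X V) (χ : X → C) : Prop := score T χ = nStates χ - 1

/-- The maximum parsimony distance between two `X`-trees. -/
noncomputable def dMP {V₁ V₂ : Type} [Fintype V₁] [Fintype V₂]
    (T₁ : XTree X V₁) (T₂ : XTree X V₂) : ℕ :=
  sSup {d | ∃ χ : X → ℕ, Nat.dist (score T₁ χ) (score T₂ χ) = d}

/-- A character achieving the maximum parsimony distance. -/
def IsOptimal {V₁ V₂ : Type} [Fintype V₁] [Fintype V₂]
    (T₁ : XTree X V₁) (T₂ : XTree X V₂) (χ : X → C) : Prop :=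
  Nat.dist (score T₁ χ) (score T₂ χ) = dMP T₁ T₂

/-- The forest induced by an extension `ω`: delete all mutation edges of `ω` from `T`. -/
noncomputable def forest (T : XTree X V) (ω : V → C) : SimpleGraph V :=
  T.g.deleteEdges (mutationEdges T.g ω)

/-- A connected component `c` of the forest `F` carries the state `s`. -/
def carries {V C : Type} (F : SimpleGraph V) (ω : V → C) (c : F.ConnectedComponent) (s : C) : Prop :=
  ∃ v, F.connectedComponentMk v = c ∧ ω v = s

/-- The number of components of `F` carrying the state `s`. A state is *unique*
if this is 1 and *repeating* if this is at least 2. -/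
noncomputable def stateMultiplicity {V C : Type} (F : SimpleGraph V) (ω : V → C) (s : C) : ℕ :=
  {c : F.ConnectedComponent | carries F ω c s}.ncard

/-- Relabel the state `A` as `B` in the character `χ`. -/
def relabel {X C : Type} [DecidableEq C] (χ : X → C) (A B : C) : X → C :=
  fun x => if χ x = A then B else χ x

/-- Two states `A`, `B` are adjacent (with respect to the coloring `ω`) if some edge of the
graph joins a vertex colored `A` to a vertex colored `B`; for distinct states, this edge is a
mutation edge joining the corresponding components of the induced forest. -/
def statesAdjacent {V C : Type} (g : SimpleGraph V) (ω : V → C) (A B : C) : Prop :=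
  ∃ u v, g.Adj u v ∧ ω u = A ∧ ω v = B

end PhyloMP

section AuxLemmas

open SimpleGraph PhyloMP

variable {V : Type}

private lemma cc_card_one {G : SimpleGraph V} (h : G.Connected) :
    Nat.card G.ConnectedComponent = 1 := by
  rw [Nat.card_eq_one_iff_unique]
  refine ⟨⟨fun a b => ?_⟩, ⟨G.connectedComponentMk h.nonempty.some⟩⟩
  obtain ⟨x, rfl⟩ := a.exists_rep
  obtain ⟨y, rfl⟩ := b.exists_rep
  exact SimpleGraph.ConnectedComponent.eq.mpr (h.preconnected _ _)

private lemma acyclic_mono {G H : SimpleGraph V} (hle : H ≤ G) (hG : G.IsAcyclic) :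
    H.IsAcyclic := fun _ c hc => hG (c.mapLe hle) (hc.mapLe hle)

private lemma card_cc_deleteEdge [Fintype V] {G : SimpleGraph V} {u v : V}
    (huv : G.Adj u v) (hb : ¬(G.deleteEdges {s(u,v)}).Reachable u v) :
    Nat.card (G.deleteEdges {s(u,v)}).ConnectedComponent
      = Nat.card G.ConnectedComponent + 1 := by
  classical
  set G' := G.deleteEdges {s(u,v)} with hG'
  set F : V → G'.ConnectedComponent :=
    fun a => if G'.Reachable a v then G'.connectedComponentMk u
             else G'.connectedComponentMk a with hF
  have hadj : ∀ a b : V, G.Adj a b → F a = F b := by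
    intro a b hab
    by_cases he : s(a,b) = s(u,v)
    · have hFu : F u = G'.connectedComponentMk u := by
        by_cases h1 : G'.Reachable u v <;> simp [hF, h1]
      have hFv : F v = G'.connectedComponentMk u := by
        simp [hF, SimpleGraph.Reachable.refl]
      rcases Sym2.eq_iff.mp he with ⟨h1, h2⟩ | ⟨h1, h2⟩ <;>
        rw [h1, h2] <;> rw [hFu, hFv]
    · have hab' : G'.Adj a b := by
        rw [hG', SimpleGraph.deleteEdges_adj]
        exact ⟨hab, by simpa using he⟩
      by_cases h1 : G'.Reachable a v
      · have h2 : G'.Reachable b v := (hab'.symm.reachable).trans h1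
        simp [hF, h1, h2]
      · have h2 : ¬ G'.Reachable b v := fun h => h1 (hab'.reachable.trans h)
        simp only [hF, if_neg h1, if_neg h2]
        exact SimpleGraph.ConnectedComponent.eq.mpr hab'.reachable
  have hwalk0 : ∀ (a b : V), G.Reachable a b → F a = F b := by
    intro a b hab
    obtain ⟨p⟩ := hab
    induction p with
    | nil => rfl
    | cons h q ih => exact (hadj _ _ h).trans ih
  set Φ : G.ConnectedComponent → G'.ConnectedComponent :=
    SimpleGraph.ConnectedComponent.lift F
      (fun a b p _ => hwalk0 a b ⟨p⟩) with hΦ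
  set π : G'.ConnectedComponent → G.ConnectedComponent :=
    SimpleGraph.ConnectedComponent.map
      (SimpleGraph.Hom.ofLE (SimpleGraph.deleteEdges_le _)) with hπ
  have hπmk : ∀ a : V, π (G'.connectedComponentMk a) = G.connectedComponentMk a :=
    fun a => rfl
  have hΦmk : ∀ a : V, Φ (G.connectedComponentMk a) = F a := fun a => rfl
  have huneqv : G'.connectedComponentMk u ≠ G'.connectedComponentMk v := by
    intro h; exact hb (SimpleGraph.ConnectedComponent.eq.mp h)
  have hΦne : ∀ d, Φ d ≠ G'.connectedComponentMk v := by
    intro d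
    induction d using SimpleGraph.ConnectedComponent.ind with
    | _ a =>
      rw [hΦmk]
      by_cases h1 : G'.Reachable a v
      · simpa [hF, h1] using huneqv
      · simp only [hF, if_neg h1]
        intro h; exact h1 (SimpleGraph.ConnectedComponent.eq.mp h)
  have hleft : ∀ c : G'.ConnectedComponent, c ≠ G'.connectedComponentMk v →
      Φ (π c) = c := by
    intro c
    induction c using SimpleGraph.ConnectedComponent.ind with
    | _ a =>
      intro hc
      have h1 : ¬ G'.Reachable a v := by
        intro h; exact hc (SimpleGraph.ConnectedComponent.eq.mpr h)
      rw [hπmk, hΦmk]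
      simp only [hF, if_neg h1]
  have hright : ∀ d : G.ConnectedComponent, π (Φ d) = d := by
    intro d
    induction d using SimpleGraph.ConnectedComponent.ind with
    | _ a =>
      rw [hΦmk]
      by_cases h1 : G'.Reachable a v
      · simp only [hF, if_pos h1, hπmk]
        exact SimpleGraph.ConnectedComponent.eq.mpr
          (huv.reachable.trans (h1.mono (SimpleGraph.deleteEdges_le _)).symm)
      · simp only [hF, if_neg h1, hπmk]
  have E : {c : G'.ConnectedComponent // c ≠ G'.connectedComponentMk v}
      ≃ G.ConnectedComponent :=
    ⟨fun c => π c.1, fun d => ⟨Φ d, hΦne d⟩,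
      fun c => Subtype.ext (hleft c.1 c.2), fun d => hright d⟩
  have hopt : G'.ConnectedComponent
      ≃ Option {c : G'.ConnectedComponent // c ≠ G'.connectedComponentMk v} :=
    (Equiv.optionSubtypeNe (G'.connectedComponentMk v)).symm
  rw [Nat.card_congr hopt, Finite.card_option, Nat.card_congr E]

private lemma card_cc_deleteEdges [Fintype V] {G : SimpleGraph V}
    (hc : G.Connected) (ha : G.IsAcyclic) :
    ∀ (S : Finset (Sym2 V)), ↑S ⊆ G.edgeSet →
      Nat.card (G.deleteEdges ↑S).ConnectedComponent = S.card + 1 := by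
  classical
  intro S
  induction S using Finset.induction_on with
  | empty => intro _; simpa using cc_card_one hc
  | @insert e s he ih =>
    intro hS
    have hs : (↑s : Set (Sym2 V)) ⊆ G.edgeSet := by
      intro x hx; exact hS (by simpa using Or.inr hx)
    have heE : e ∈ (G.deleteEdges ↑s).edgeSet := by
      rw [SimpleGraph.edgeSet_deleteEdges]
      exact ⟨hS (by simp), by simpa using he⟩
    induction e using Sym2.ind with
    | _ u v =>
    have hadj : (G.deleteEdges ↑s).Adj u v := (SimpleGraph.mem_edgeSet _).mp heE
    have hacy : (G.deleteEdges ↑s).IsAcyclic :=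
      acyclic_mono (SimpleGraph.deleteEdges_le _) ha
    have hbridge := (isAcyclic_iff_forall_adj_isBridge.mp hacy) hadj
    rw [SimpleGraph.isBridge_iff] at hbridge
    have hkey := card_cc_deleteEdge hadj hbridge
    have hrw : (G.deleteEdges ↑s).deleteEdges {s(u,v)}
        = G.deleteEdges ↑(insert s(u,v) s) := by
      rw [SimpleGraph.deleteEdges_deleteEdges]
      congr 1
      rw [Finset.coe_insert, Set.insert_eq, Set.union_comm]
    rw [hrw] at hkey
    rw [hkey, ih hs, Finset.card_insert_of_notMem he]

private lemma exists_boundary {V : Type} {G Fo : SimpleGraph V} {c : Fo.ConnectedComponent} :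
    ∀ {a b : V}, G.Walk a b → Fo.connectedComponentMk a = c →
      Fo.connectedComponentMk b ≠ c →
      ∃ p' q' : V, G.Adj p' q' ∧ Fo.connectedComponentMk p' = c ∧
        Fo.connectedComponentMk q' ≠ c := by
  intro a b p
  induction p with
  | nil => intro h1 h2; exact absurd h1 h2
  | @cons u m w h q ih =>
    intro h1 h2
    by_cases hm : Fo.connectedComponentMk m = c
    · exact ih hm h2
    · exact ⟨u, m, h, h1, hm⟩

private lemma xtree_X_nonempty {X V : Type} [Fintype V] (T : XTree X V) : Nonempty X := by
  classical
  by_contra hX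
  have hdeg3 : ∀ v : V, T.g.degree v = 3 := by
    intro v
    have hncard : (T.g.neighborSet v).ncard = T.g.degree v := by
      rw [Set.ncard_eq_toFinset_card', Set.toFinset_card]
      exact SimpleGraph.card_neighborSet_eq_degree T.g v
    rcases eq_or_ne ((T.g.neighborSet v).ncard) 1 with h|h
    · obtain ⟨x, -⟩ := T.leavesOnly v h
      exact absurd ⟨x⟩ hX
    · rw [← hncard]; exact T.internalDeg v h
  have hsum := SimpleGraph.sum_degrees_eq_twice_card_edges T.g
  have hE := T.isTree.card_edgeFinset
  have h3 : ∑ v : V, T.g.degree v = 3 * Fintype.card V := by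
    rw [Finset.sum_congr rfl fun v _ => hdeg3 v]
    simp [Finset.card_univ, mul_comm]
  rw [h3] at hsum
  have hpos : 0 < Fintype.card V := Fintype.card_pos_iff.mpr T.isTree.isConnected.nonempty
  omega

end AuxLemmas

open PhyloMP in
/-- `χ` is convex on `T` iff every state of `χ` is carried by exactly one
component of the forest induced by a most parsimonious extension. -/
theorem stmt_7 {X V C : Type} [Fintype V] (T : XTree X V) (χ : X → C) (ω : V → C)
    (hω : IsMPExtension T χ ω) :
    IsConvex T χ ↔ ∀ s ∈ Set.range χ, stateMultiplicity (forest T ω) ω s = 1 := by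
  classical
  obtain ⟨hext, hscore⟩ := hω
  set F := forest T ω with hFdef
  have hmut_mem : ∀ (σ : V → C) (a b : V),
      s(a,b) ∈ mutationEdges T.g σ ↔ (T.g.Adj a b ∧ σ a ≠ σ b) := by
    intro σ a b
    constructor
    · rintro ⟨he, u', v', hs, hne⟩
      refine ⟨he, ?_⟩
      rcases Sym2.eq_iff.mp hs with ⟨h1, h2⟩ | ⟨h1, h2⟩
      · rw [h1, h2]; exact hne
      · rw [h1, h2]; exact hne.symm
    · rintro ⟨h1, h2⟩
      exact ⟨h1, a, b, rfl, h2⟩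
  have hF_adj : ∀ a b : V, F.Adj a b ↔ (T.g.Adj a b ∧ ω a = ω b) := by
    intro a b
    rw [hFdef]
    show (T.g.deleteEdges _).Adj a b ↔ _
    rw [SimpleGraph.deleteEdges_adj, hmut_mem]
    constructor
    · rintro ⟨h1, h2⟩
      refine ⟨h1, by_contra fun hne => h2 ⟨h1, hne⟩⟩
    · rintro ⟨h1, h2⟩
      exact ⟨h1, fun hc => hc.2 h2⟩
  have hω_reach : ∀ a b : V, F.Reachable a b → ω a = ω b := by
    intro a b hab
    obtain ⟨p⟩ := hab
    induction p with
    | nil => rfl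
    | cons h q ih => exact ((hF_adj _ _).mp h).2.trans ih
  set Ω : F.ConnectedComponent → C :=
    SimpleGraph.ConnectedComponent.lift ω (fun a b p _ => hω_reach a b ⟨p⟩) with hΩdef
  have hΩmk : ∀ a : V, Ω (F.connectedComponentMk a) = ω a := fun a => rfl
  have hcarries : ∀ (c : F.ConnectedComponent) (s : C), carries F ω c s ↔ Ω c = s := by
    intro c s
    constructor
    · rintro ⟨w, rfl, rfl⟩; exact hΩmk w
    · induction c using SimpleGraph.ConnectedComponent.ind with
      | _ a =>
        intro h
        exact ⟨a, rfl, (hΩmk a).symm.trans h⟩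
  have hmult : ∀ s : C, stateMultiplicity F ω s = {c : F.ConnectedComponent | Ω c = s}.ncard := by
    intro s
    unfold PhyloMP.stateMultiplicity
    congr 1
    ext c
    exact hcarries c s
  have hfin : (mutationEdges T.g ω).Finite := Set.toFinite _
  have hsub : mutationEdges T.g ω ⊆ T.g.edgeSet := fun e he => he.1
  have hcomp : Nat.card F.ConnectedComponent = (mutationEdges T.g ω).ncard + 1 := by
    have h1 := card_cc_deleteEdges T.isTree.isConnected T.isTree.IsAcyclic hfin.toFinset
      (by rw [Set.Finite.coe_toFinset]; exact hsub)
    rw [Set.Finite.coe_toFinset] at h1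
    rw [← Set.ncard_eq_toFinset_card _ hfin] at h1
    exact h1
  have hX : Nonempty X := xtree_X_nonempty T
  have hrange_fin : (Set.range χ).Finite := by
    have hss : Set.range χ ⊆ Set.range ω := by
      rintro _ ⟨x, rfl⟩
      exact ⟨T.leaf x, hext x⟩
    exact (Set.finite_range ω).subset hss
  haveI : Finite (Set.range χ) := hrange_fin.to_subtype
  haveI : Finite F.ConnectedComponent := Quot.finite _
  have hnstates : nStates χ = Nat.card (Set.range χ) := (Nat.card_coe_set_eq _).symm
  choose pick hpick using fun (s : Set.range χ) => s.2
  set ι : Set.range χ → F.ConnectedComponent :=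
    fun s => F.connectedComponentMk (T.leaf (pick s)) with hιdef
  have hΩι : ∀ s : Set.range χ, Ω (ι s) = s.1 := by
    intro s
    rw [hιdef]
    show ω (T.leaf (pick s)) = s.1
    exact (hext (pick s)).trans (hpick s)
  have hι_inj : Function.Injective ι := by
    intro s t h
    apply Subtype.ext
    rw [← hΩι s, ← hΩι t, h]
  constructor
  · intro hconv s hs
    have hk : (mutationEdges T.g ω).ncard = nStates χ - 1 := by
      rw [hscore]; exact hconv
    have hpos : 1 ≤ nStates χ := by
      rw [hnstates]
      haveI : Nonempty (Set.range χ) := ⟨⟨s, hs⟩⟩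
      have := Nat.card_pos (α := Set.range χ)
      omega
    have hcard_eq : Nat.card (Set.range χ) = Nat.card F.ConnectedComponent := by
      rw [hcomp, hk, ← hnstates]
      omega
    have hbij : Function.Bijective ι :=
      (Nat.bijective_iff_injective_and_card ι).mpr ⟨hι_inj, hcard_eq⟩
    rw [hmult]
    have hset : {c : F.ConnectedComponent | Ω c = s} = {ι ⟨s, hs⟩} := by
      ext c
      simp only [Set.mem_setOf_eq, Set.mem_singleton_iff]
      constructor
      · intro h
        obtain ⟨t, rfl⟩ := hbij.2 c
        have ht : t = ⟨s, hs⟩ := Subtype.ext ((hΩι t).symm.trans h)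
        rw [ht]
      · rintro rfl
        exact hΩι _
    rw [hset, Set.ncard_singleton]
  · intro h1
    have hC : ∀ c : F.ConnectedComponent, Ω c ∈ Set.range χ := by
      intro c
      by_contra hc
      have hnoleaf : ∀ x : X, F.connectedComponentMk (T.leaf x) ≠ c := by
        intro x hx
        refine hc ⟨x, ?_⟩
        rw [← hx, hΩmk]
        exact (hext x).symm
      obtain ⟨a, ha⟩ := c.exists_rep
      have ha : F.connectedComponentMk a = c := ha
      obtain ⟨x0⟩ := hX
      obtain ⟨p⟩ := T.isTree.isConnected.preconnected a (T.leaf x0)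
      obtain ⟨pp, qq, hadjpq, hpc, hqc⟩ := exists_boundary p ha (hnoleaf x0)
      have hωpq : ω pp ≠ ω qq := by
        intro he
        have hadjF : F.Adj pp qq := (hF_adj pp qq).mpr ⟨hadjpq, he⟩
        have : F.connectedComponentMk qq = F.connectedComponentMk pp :=
          (SimpleGraph.ConnectedComponent.eq.mpr hadjF.reachable).symm
        exact hqc (this.trans hpc)
      set ω' : V → C := fun w => if F.connectedComponentMk w = c then ω qq else ω w with hω'
      have hext' : IsExtension T χ ω' := by
        intro x
        simp only [hω', if_neg (hnoleaf x)]
        exact hext x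
      have hsubset : mutationEdges T.g ω' ⊆ mutationEdges T.g ω := by
        intro e he
        induction e using Sym2.ind with
        | _ a b =>
          obtain ⟨hadj, hne⟩ := (hmut_mem ω' a b).mp he
          refine (hmut_mem ω a b).mpr ⟨hadj, ?_⟩
          by_cases hac : F.connectedComponentMk a = c <;>
            by_cases hbc : F.connectedComponentMk b = c
          · exact absurd (by simp [hω', hac, hbc]) hne
          · intro heq
            have hadjF : F.Adj a b := (hF_adj a b).mpr ⟨hadj, heq⟩
            exact hbc (((SimpleGraph.ConnectedComponent.eq.mpr hadjF.reachable).symm).trans hac)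
          · intro heq
            have hadjF : F.Adj a b := (hF_adj a b).mpr ⟨hadj, heq⟩
            exact hac ((SimpleGraph.ConnectedComponent.eq.mpr hadjF.reachable).trans hbc)
          · intro heq
            exact hne (by simp [hω', hac, hbc, heq])
      have hssub : mutationEdges T.g ω' ⊂ mutationEdges T.g ω := by
        refine ⟨hsubset, fun hsup => ?_⟩
        have hmem : s(pp,qq) ∈ mutationEdges T.g ω :=
          (hmut_mem ω pp qq).mpr ⟨hadjpq, hωpq⟩
        obtain ⟨-, hne⟩ := (hmut_mem ω' pp qq).mp (hsup hmem)
        exact hne (by simp [hω', hpc, hqc])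
      have hlt : (mutationEdges T.g ω').ncard < (mutationEdges T.g ω).ncard :=
        Set.ncard_lt_ncard hssub (Set.toFinite _)
      have hle : score T χ ≤ (mutationEdges T.g ω').ncard := Nat.sInf_le ⟨ω', hext', rfl⟩
      omega
    have hι_surj : Function.Surjective ι := by
      intro c
      refine ⟨⟨Ω c, hC c⟩, ?_⟩
      have hm := h1 (Ω c) (hC c)
      rw [hmult] at hm
      obtain ⟨c0, hc0⟩ := Set.ncard_eq_one.mp hm
      have h1' : ι ⟨Ω c, hC c⟩ ∈ {c' : F.ConnectedComponent | Ω c' = Ω c} := hΩι _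
      have h2' : c ∈ {c' : F.ConnectedComponent | Ω c' = Ω c} := rfl
      rw [hc0, Set.mem_singleton_iff] at h1' h2'
      rw [h1', ← h2']
    have hcard_eq : Nat.card (Set.range χ) = Nat.card F.ConnectedComponent :=
      Nat.card_eq_of_bijective ι ⟨hι_inj, hι_surj⟩
    show score T χ = nStates χ - 1
    rw [← hscore, hnstates, hcard_eq, hcomp]
    omega
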